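/- With Ŝ_q[n,k] the q-Stirling numbers of the second kind defined by Ŝ_q[n,k] = Ŝ_q[n-1,k-1] + [k]_q·Ŝ_q[n-1,k] (initial conditions Ŝ_q[n,0]=Ŝ_q[0,n]=δ_{n,0}), the inverse Carlitz identity holds: (q−1)^{n−k}·Ŝ_q[n,k] = ∑_{j=k}^{n} (−1)^{n−j}·C(n,j)·[j choose k]_q, where [j choose k]_q is the Gaussian binomial coefficient. -/
import Mathlib


open Finset

/-- The q-integer `[k]_q = 1 + q + ... + q^(k-1)`. -/
def qint {K : Type*} [CommRing K] (q : K) (k : ℕ) : K := ∑ i ∈ Finset.range k, q ^ i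

/-- The q-Stirling numbers of the second kind. -/
def Shat {K : Type*} [CommRing K] (q : K) : ℕ → ℕ → K
  | 0, 0 => 1
  | 0, _ + 1 => 0
  | _ + 1, 0 => 0
  | n + 1, k + 1 => Shat q n k + qint q (k + 1) * Shat q n (k + 1)

/-- The Gaussian binomial coefficient. -/
def gauss {K : Type*} [CommRing K] (q : K) : ℕ → ℕ → K
  | 0, 0 => 1
  | 0, _ + 1 => 0
  | _ + 1, 0 => 1
  | n + 1, k + 1 => gauss q n k + q ^ (k + 1) * gauss q n (k + 1)

section Aux
variable {K : Type*} [CommRing K] (q : K)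

lemma Shat_eq_zero' (n : ℕ) : ∀ k, n < k → Shat q n k = 0 := by
  induction n with
  | zero => intro k hk; match k with | k + 1 => rfl
  | succ n ih =>
    intro k hk
    match k with
    | k + 1 => simp [Shat, ih k (by omega), ih (k+1) (by omega)]

lemma gauss_eq_zero' (n : ℕ) : ∀ k, n < k → gauss q n k = 0 := by
  induction n with
  | zero => intro k hk; match k with | k + 1 => rfl
  | succ n ih =>
    intro k hk
    match k with
    | k + 1 => simp [gauss, ih k (by omega), ih (k+1) (by omega)]

lemma gauss_zero_right' (n : ℕ) : gauss q n 0 = 1 := by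
  match n with | 0 => rfl | n + 1 => rfl

lemma alt_sum' (n : ℕ) :
    ∑ j ∈ Icc 0 n, (-1 : K) ^ (n - j) * (n.choose j : K) = if n = 0 then 1 else 0 := by
  rw [← Finset.Ico_add_one_right_eq_Icc, ← Finset.range_eq_Ico]
  rw [← Finset.sum_range_reflect]
  have h1 : ∀ j ∈ range (n + 1), (-1 : K) ^ (n - (n + 1 - 1 - j)) * (n.choose (n + 1 - 1 - j) : K)
      = (-1 : K) ^ j * (n.choose j : K) := by
    intro j hj
    simp only [mem_range] at hj
    rw [show n + 1 - 1 - j = n - j by omega, show n - (n - j) = j by omega,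
      Nat.choose_symm (by omega)]
  rw [Finset.sum_congr rfl h1]
  have h2 := Int.alternating_sum_range_choose (n := n)
  calc ∑ j ∈ range (n + 1), (-1 : K) ^ j * (n.choose j : K)
      = ((∑ m ∈ range (n + 1), (-1 : ℤ) ^ m * (n.choose m : ℤ) : ℤ) : K) := by
        push_cast; ring
    _ = if n = 0 then 1 else 0 := by rw [h2]; split <;> simp

lemma sum_Icc_shift' (f : ℕ → K) (a b : ℕ) :
    ∑ j ∈ Icc (a+1) (b+1), f j = ∑ j ∈ Icc a b, f (j+1) := by
  rw [← map_add_right_Icc a b 1, Finset.sum_map]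
  rfl

lemma rhs_rec' (n k : ℕ) :
    ∑ j ∈ Icc (k+1) (n+1), (-1 : K) ^ (n+1-j) * ((n+1).choose j : K) * gauss q j (k+1)
      = (∑ j ∈ Icc k n, (-1 : K) ^ (n-j) * (n.choose j : K) * gauss q j k)
        + (q ^ (k+1) - 1) * ∑ j ∈ Icc (k+1) n, (-1 : K) ^ (n-j) * (n.choose j : K) * gauss q j (k+1) := by
  rw [sum_Icc_shift']
  have hterm : ∀ j ∈ Icc k n,
      (-1 : K) ^ (n+1-(j+1)) * ((n+1).choose (j+1) : K) * gauss q (j+1) (k+1)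
      = ((-1 : K) ^ (n-j) * (n.choose j : K) * gauss q j k
          + q ^ (k+1) * ((-1 : K) ^ (n-j) * (n.choose j : K) * gauss q j (k+1)))
        + (-1 : K) ^ (n+1-(j+1)) * (n.choose (j+1) : K) * gauss q (j+1) (k+1) := by
    intro j hj
    rw [Nat.choose_succ_succ,
      show gauss q (j+1) (k+1) = gauss q j k + q^(k+1) * gauss q j (k+1) from rfl,
      Nat.succ_sub_succ]
    push_cast
    ring
  rw [Finset.sum_congr rfl hterm, Finset.sum_add_distrib, Finset.sum_add_distrib]
  have hmid : ∑ j ∈ Icc k n, q ^ (k+1) * ((-1 : K) ^ (n-j) * (n.choose j : K) * gauss q j (k+1))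
      = q ^ (k+1) * ∑ j ∈ Icc (k+1) n, (-1 : K) ^ (n-j) * (n.choose j : K) * gauss q j (k+1) := by
    rw [← Finset.mul_sum]
    congr 1
    rcases Nat.lt_or_ge n k with h | h
    · rw [Finset.Icc_eq_empty (by omega), Finset.Icc_eq_empty (by omega)]
    · rw [show Icc k n = insert k (Icc (k+1) n) by
        rw [Finset.Icc_add_one_left_eq_Ioc, Finset.Icc_eq_cons_Ioc h, Finset.cons_eq_insert]]
      rw [Finset.sum_insert (by simp [Finset.Icc_add_one_left_eq_Ioc])]
      rw [gauss_eq_zero' q k (k+1) (by omega), mul_zero, zero_add]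
  have hlast : ∑ j ∈ Icc k n, (-1 : K) ^ (n+1-(j+1)) * (n.choose (j+1) : K) * gauss q (j+1) (k+1)
      = - ∑ j ∈ Icc (k+1) n, (-1 : K) ^ (n-j) * (n.choose j : K) * gauss q j (k+1) := by
    rcases Nat.lt_or_ge n k with h | h
    · rw [Finset.Icc_eq_empty (by omega), Finset.Icc_eq_empty (by omega)]; simp
    · rw [← sum_Icc_shift' (fun j => (-1 : K) ^ (n+1-j) * (n.choose j : K) * gauss q j (k+1)),
        Finset.sum_Icc_succ_top (by omega)]
      rw [Nat.choose_succ_self, ← Finset.sum_neg_distrib]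
      push_cast
      rw [mul_zero, zero_mul, add_zero]
      refine Finset.sum_congr rfl fun j hj => ?_
      simp only [mem_Icc] at hj
      rw [show n + 1 - j = (n - j) + 1 by omega, pow_succ]
      ring
  rw [hmid, hlast]
  ring

end Aux

theorem stmt_11 {K : Type*} [CommRing K] (q : K) (n k : ℕ) :
    (q - 1) ^ (n - k) * Shat q n k =
      ∑ j ∈ Finset.Icc k n, (-1 : K) ^ (n - j) * (Nat.choose n j : K) * gauss q j k := by
  induction n generalizing k with
  | zero =>
    cases k with
    | zero => simp [Shat, gauss]
    | succ k =>
      rw [Finset.Icc_eq_empty (by omega), Finset.sum_empty,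
        Shat_eq_zero' q 0 (k+1) (by omega), mul_zero]
  | succ n ih =>
    cases k with
    | zero =>
      rw [show Shat q (n+1) 0 = 0 from rfl, mul_zero]
      have h1 : ∀ j ∈ Icc 0 (n+1), (-1 : K) ^ (n+1-j) * ((n+1).choose j : K) * gauss q j 0
          = (-1 : K) ^ (n+1-j) * ((n+1).choose j : K) := by
        intro j _; rw [gauss_zero_right', mul_one]
      rw [Finset.sum_congr rfl h1, alt_sum' (K := K) (n+1)]
      simp
    | succ k =>
      rw [rhs_rec', ← ih k, ← ih (k+1),
        show Shat q (n+1) (k+1) = Shat q n k + qint q (k+1) * Shat q n (k+1) from rfl,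
        Nat.succ_sub_succ]
      rcases Nat.lt_or_ge n (k+1) with h | h
      · rw [Shat_eq_zero' q n (k+1) h]; ring
      · have hq : (q ^ (k+1) - 1) = (q - 1) * qint q (k+1) := by
          rw [qint, mul_comm, geom_sum_mul]
        rw [hq, show n - k = (n - (k+1)) + 1 by omega, pow_succ]
        ring
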